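/- Given the hypergraph model H_μ and a 2-way partition P = (C, C̄) of H_μ with the contracted node r ∈ C̄, the motif conductance φ_μ(C') of the corresponding 2-way partition P' = (C', C̄') of G equals cut(P) / d_w(C), where cut(P) is the (weighted) number of cut nets of P and d_w(C) is the weighted volume of C in H_μ, provided the motif enumeration is exact and d_μ(S) ≤ d_μ(S̄) in G. -/
import Mathlib


open Classical in
/-- Conductance equivalence: for a 2-way partition `(C, C̄)` of the hypergraph
model `H_μ` with the contracted node `r ∈ C̄`, the motif conductance of the
corresponding cluster `C'` of `G` equals the ratio of the cut-net of the
model partition to the weighted volume of `C` in the model, assuming exact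
motif enumeration and `d_μ(S) ≤ d_μ(S̄)`. -/
theorem stmt_6 {V : Type*} [Fintype V] [DecidableEq V]
    (S : Finset V) (Mall M : Finset (Finset V))
    (hM : M = Mall.filter (fun m => (m ∩ S).Nonempty))
    (φ : V → ({v // v ∈ S} ⊕ Unit))
    (hφ : ∀ v, φ v = if h : v ∈ S then Sum.inl ⟨v, h⟩ else Sum.inr ())
    (C : Finset ({v // v ∈ S} ⊕ Unit)) (hr : Sum.inr () ∉ C)
    (C' : Finset V) (hC' : C' = Finset.univ.filter (fun v => φ v ∈ C))
    (dμ : Finset V → ℕ) (hdμ : ∀ A, dμ A = ∑ m ∈ Mall, (m ∩ A).card)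
    (hball : dμ S ≤ dμ Sᶜ)
    (cutP : ℕ)
    (hcut : cutP = (M.filter (fun m =>
        (∃ x ∈ m, φ x ∈ C) ∧ (∃ x ∈ m, φ x ∉ C))).card)
    (dw : ℕ) (hdw : dw = ∑ m ∈ M, ((m.image φ) ∩ C).card) :
    ((Mall.filter (fun m => (m ∩ C').Nonempty ∧ (m \ C').Nonempty)).card : ℝ)
        / min (dμ C') (dμ C'ᶜ)
      = (cutP : ℝ) / dw := by
  have hmemC' : ∀ v, v ∈ C' ↔ φ v ∈ C := by
    intro v; simp [hC']
  have hC'S : ∀ v, v ∈ C' → v ∈ S := by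
    intro v hv
    by_contra h
    rw [hmemC'] at hv
    rw [hφ v, dif_neg h] at hv
    exact hr hv
  -- numerator equality
  have hnum : Mall.filter (fun m => (m ∩ C').Nonempty ∧ (m \ C').Nonempty)
      = M.filter (fun m => (∃ x ∈ m, φ x ∈ C) ∧ (∃ x ∈ m, φ x ∉ C)) := by
    subst hM
    ext m
    simp only [Finset.mem_filter, Finset.filter_filter]
    constructor
    · rintro ⟨hm, ⟨x, hx⟩, ⟨y, hy⟩⟩
      rw [Finset.mem_inter] at hx
      rw [Finset.mem_sdiff] at hy
      exact ⟨hm, ⟨x, Finset.mem_inter.mpr ⟨hx.1, hC'S x hx.2⟩⟩,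
        ⟨x, hx.1, (hmemC' x).1 hx.2⟩,
        ⟨y, hy.1, fun h => hy.2 ((hmemC' y).2 h)⟩⟩
    · rintro ⟨hm, _, ⟨x, hx, hxC⟩, ⟨y, hy, hyC⟩⟩
      exact ⟨hm, ⟨x, Finset.mem_inter.mpr ⟨hx, (hmemC' x).2 hxC⟩⟩,
        ⟨y, Finset.mem_sdiff.mpr ⟨hy, fun h => hyC ((hmemC' y).1 h)⟩⟩⟩
  -- per-motif card equality
  have hcard : ∀ m : Finset V, (m ∩ C').card = ((m.image φ) ∩ C).card := by
    intro m
    have himg : (m.image φ) ∩ C = (m ∩ C').image φ := by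
      ext a
      simp only [Finset.mem_inter, Finset.mem_image]
      constructor
      · rintro ⟨⟨x, hx, rfl⟩, hC⟩
        exact ⟨x, ⟨hx, (hmemC' x).2 hC⟩, rfl⟩
      · rintro ⟨x, ⟨hx, hxC⟩, rfl⟩
        exact ⟨⟨x, hx, rfl⟩, (hmemC' x).1 hxC⟩
    rw [himg, Finset.card_image_of_injOn]
    intro a ha b hb hab
    rw [Finset.mem_coe, Finset.mem_inter] at ha hb
    rw [hφ a, hφ b, dif_pos (hC'S a ha.2), dif_pos (hC'S b hb.2)] at hab
    exact congrArg Subtype.val (Sum.inl.inj hab)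
  -- denominator equality
  have hdweq : dμ C' = dw := by
    rw [hdμ, hdw, hM]
    rw [← Finset.sum_filter_of_ne (p := fun m => (m ∩ S).Nonempty)
      (fun m _ h => by
        obtain ⟨x, hx⟩ := Finset.card_ne_zero.mp h
        rw [Finset.mem_inter] at hx
        exact ⟨x, Finset.mem_inter.mpr ⟨hx.1, hC'S x hx.2⟩⟩)]
    exact Finset.sum_congr rfl fun m _ => hcard m
  have hmono : ∀ A B : Finset V, A ⊆ B → dμ A ≤ dμ B := by
    intro A B hAB
    rw [hdμ, hdμ]
    exact Finset.sum_le_sum fun m _ =>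
      Finset.card_le_card (Finset.inter_subset_inter (le_refl m) hAB)
  have hle : dμ C' ≤ dμ C'ᶜ :=
    le_trans (hmono C' S hC'S) (le_trans hball (hmono Sᶜ C'ᶜ
      (Finset.compl_subset_compl.mpr hC'S)))
  rw [hnum, ← hcut, min_eq_left hle, hdweq]
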